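/- Let ψ : [0,∞) → [0,∞) be convex, continuously differentiable, twice differentiable on (0,∞), with ψ(0) = 0, and suppose there is a constant E > 0 such that ψ''(a x) ≤ E·ψ''(x) for all x > 0 and all a ∈ [1,2]. Then for all x, y ≥ 0: ψ(x+y) − ψ(x) − ψ(y) ≥ (1/(2E))·x·y·ψ''(x+y). -/

import Mathlib

open Set

private theorem povzner_aux
    (ψ ψ' ψ'' : ℝ → ℝ)
    (hconv : ConvexOn ℝ (Set.Ici (0 : ℝ)) ψ)
    (hψ0 : ψ 0 = 0)
    (hderiv : ∀ x ∈ Set.Ici (0 : ℝ), HasDerivWithinAt ψ (ψ' x) (Set.Ici (0 : ℝ)) x)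
    (hcont : ContinuousOn ψ' (Set.Ici (0 : ℝ)))
    (hderiv2 : ∀ x : ℝ, 0 < x → HasDerivAt ψ' (ψ'' x) x)
    (E : ℝ) (hE : 0 < E)
    (hdoub : ∀ x : ℝ, 0 < x → ∀ a ∈ Set.Icc (1 : ℝ) 2, ψ'' (a * x) ≤ E * ψ'' x)
    (x y : ℝ) (hx : 0 ≤ x) (hy : 0 ≤ y) (hxy : x ≤ y) :
    (1 / (2 * E)) * (x * y * ψ'' (x + y)) ≤ ψ (x + y) - ψ x - ψ y := by
  rcases eq_or_lt_of_le hx with hx0 | hx0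
  · rw [← hx0]; simp [hψ0]
  have hy0 : 0 < y := lt_of_lt_of_le hx0 hxy
  have hs0 : (0 : ℝ) < x + y := by linarith
  have hys : y < x + y := by linarith
  set c : ℝ := ψ'' (x + y) / E with hc
  -- doubling bound: ψ'' ≥ c on [ (x+y)/2 , x+y ]
  have hcb : ∀ u : ℝ, (x + y) / 2 ≤ u → u ≤ x + y → c ≤ ψ'' u := by
    intro u h1 h2
    have hu : 0 < u := by linarith
    have hd := hdoub u hu ((x + y) / u)
      ⟨(one_le_div hu).mpr h2, by rw [div_le_iff₀ hu]; linarith⟩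
    rw [div_mul_cancel₀ _ hu.ne'] at hd
    rw [hc, div_le_iff₀ hE]
    linarith
  -- monotonicity of ψ' on [0,∞)
  have hmono : ∀ a b : ℝ, 0 ≤ a → a < b → ψ' a ≤ ψ' b := by
    intro a b ha hab
    have hb : (0:ℝ) ≤ b := le_trans ha hab.le
    exact (hconv.le_slope_of_hasDerivWithinAt (mem_Ici.mpr ha) (mem_Ici.mpr hb) hab
        (hderiv a (mem_Ici.mpr ha))).trans
      (hconv.slope_le_of_hasDerivWithinAt (mem_Ici.mpr ha) (mem_Ici.mpr hb) hab
        (hderiv b (mem_Ici.mpr hb)))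
  -- F1 : ψ x ≤ ψ' x * x
  have hF1 : ψ x ≤ ψ' x * x := by
    have h := hconv.slope_le_of_hasDerivWithinAt (mem_Ici.mpr le_rfl) (mem_Ici.mpr hx) hx0
      (hderiv x (mem_Ici.mpr hx))
    rw [slope_def_field, hψ0] at h
    have h' := (div_le_iff₀ hx0).mp (by simpa using h)
    linarith
  -- F2 : ψ' x ≤ ψ' ((x+y)/2)
  have hF2 : ψ' x ≤ ψ' ((x + y) / 2) := by
    rcases eq_or_lt_of_le (show x ≤ (x + y) / 2 by linarith) with he | hlt
    · rw [← he]
    · exact hmono _ _ hx hlt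
  have hF2' : ψ' x * x ≤ ψ' ((x + y) / 2) * x := mul_le_mul_of_nonneg_right hF2 hx
  -- F3 : c * (y - (x+y)/2) ≤ ψ' y - ψ' ((x+y)/2)
  have hF3 : c * (y - (x + y) / 2) ≤ ψ' y - ψ' ((x + y) / 2) := by
    rcases eq_or_lt_of_le (show (x + y) / 2 ≤ y by linarith) with he | hlt
    · rw [he]; simp
    · obtain ⟨η, hη, hslope⟩ := exists_hasDerivAt_eq_slope ψ' ψ'' hlt
        (hcont.mono (fun u hu => le_trans (by linarith) hu.1))
        (fun u hu => hderiv2 u (by linarith [hu.1]))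
      have hcη : c ≤ ψ'' η := hcb η hη.1.le (by linarith [hη.2])
      rw [hslope] at hcη
      have := (le_div_iff₀ (by linarith : (0:ℝ) < y - (x + y) / 2)).mp hcη
      linarith
  have hF3' : c * (y - (x + y) / 2) * x ≤ (ψ' y - ψ' ((x + y) / 2)) * x :=
    mul_le_mul_of_nonneg_right hF3 hx
  -- continuity of ψ on [0,∞)
  have hψcont : ContinuousOn ψ (Ici 0) := fun u hu => (hderiv u hu).continuousWithinAt
  -- derivatives of φ u = ψ u - c/2 * u^2
  have hφd : ∀ u : ℝ, 0 < u → HasDerivAt (fun u => ψ u - c / 2 * u ^ 2) (ψ' u - c * u) u := by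
    intro u hu
    have h1 : HasDerivAt ψ (ψ' u) u :=
      (hderiv u (mem_Ici.mpr hu.le)).hasDerivAt (Ici_mem_nhds hu)
    have h2 : HasDerivAt (fun v : ℝ => c / 2 * v ^ 2) (c / 2 * (↑2 * u ^ 1)) u :=
      (hasDerivAt_pow 2 u).const_mul (c / 2)
    have h3 : HasDerivAt (fun u => ψ u - c / 2 * u ^ 2) (ψ' u - c / 2 * (↑2 * u ^ 1)) u :=
      h1.sub h2
    convert h3 using 1
    push_cast
    ring
  have hφd2 : ∀ u : ℝ, 0 < u → HasDerivAt (fun u => ψ' u - c * u) (ψ'' u - c) u := by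
    intro u hu
    have h2 : HasDerivAt (fun v : ℝ => c * v) c u := by
      simpa using (hasDerivAt_id u).const_mul c
    exact (hderiv2 u hu).sub h2
  -- convexity of φ on [y, x+y]
  have hconvφ : ConvexOn ℝ (Icc y (x + y)) (fun u => ψ u - c / 2 * u ^ 2) := by
    apply convexOn_of_hasDerivWithinAt2_nonneg (convex_Icc y (x + y))
      (f' := fun u => ψ' u - c * u) (f'' := fun u => ψ'' u - c)
    · exact (hψcont.mono (fun u hu => le_trans hy0.le hu.1)).sub
        (Continuous.continuousOn (by continuity))
    · intro u hu
      rw [interior_Icc] at hu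
      exact (hφd u (by linarith [hu.1])).hasDerivWithinAt
    · intro u hu
      rw [interior_Icc] at hu
      exact (hφd2 u (by linarith [hu.1])).hasDerivWithinAt
    · intro u hu
      rw [interior_Icc] at hu
      have := hcb u (by linarith [hu.1]) hu.2.le
      linarith
  -- F4 : tangent line bound for φ at y
  have hF4 : (ψ' y - c * y) * x ≤
      (ψ (x + y) - c / 2 * (x + y) ^ 2) - (ψ y - c / 2 * y ^ 2) := by
    have h := hconvφ.le_slope_of_hasDerivWithinAt (left_mem_Icc.mpr hys.le)
      (right_mem_Icc.mpr hys.le) hys (hφd y hy0).hasDerivWithinAt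
    rw [slope_def_field] at h
    have h' := (le_div_iff₀ (by linarith : (0:ℝ) < x + y - y)).mp h
    have hxx : x + y - y = x := by ring
    rw [hxx] at h'
    exact h'
  -- assemble
  have key : (1 / (2 * E)) * (x * y * ψ'' (x + y)) = c * (x * y) / 2 := by
    rw [hc]; field_simp
  rw [key]
  linarith [hF1, hF2', hF3', hF4]

/-- Lower Povzner-type inequality for a convex `C¹` function `ψ : [0,∞) → [0,∞)`
with `ψ(0) = 0`, twice differentiable on `(0,∞)`, with
`ψ''(ax) ≤ E ψ''(x)` for `a ∈ [1,2]`: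
`ψ(x+y) − ψ(x) − ψ(y) ≥ (1/(2E)) x y ψ''(x+y)`. -/
theorem povzner_lower
    (ψ ψ' ψ'' : ℝ → ℝ)
    (hconv : ConvexOn ℝ (Set.Ici (0 : ℝ)) ψ)
    (hnonneg : ∀ x ∈ Set.Ici (0 : ℝ), 0 ≤ ψ x)
    (hψ0 : ψ 0 = 0)
    (hderiv : ∀ x ∈ Set.Ici (0 : ℝ), HasDerivWithinAt ψ (ψ' x) (Set.Ici (0 : ℝ)) x)
    (hcont : ContinuousOn ψ' (Set.Ici (0 : ℝ)))
    (hderiv2 : ∀ x : ℝ, 0 < x → HasDerivAt ψ' (ψ'' x) x)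
    (E : ℝ) (hE : 0 < E)
    (hdoub : ∀ x : ℝ, 0 < x → ∀ a ∈ Set.Icc (1 : ℝ) 2, ψ'' (a * x) ≤ E * ψ'' x)
    (x y : ℝ) (hx : 0 ≤ x) (hy : 0 ≤ y) :
    (1 / (2 * E)) * (x * y * ψ'' (x + y)) ≤ ψ (x + y) - ψ x - ψ y := by
  rcases le_total x y with h | h
  · exact povzner_aux ψ ψ' ψ'' hconv hψ0 hderiv hcont hderiv2 E hE hdoub x y hx hy h
  · have := povzner_aux ψ ψ' ψ'' hconv hψ0 hderiv hcont hderiv2 E hE hdoub y x hy hx h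
    rw [add_comm y x, mul_comm y x] at this
    linarith
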